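/- arXiv:1202.1223 — 2 statements merged into one kernel-verified Lean document; each statement's English description precedes it below -/
import Mathlib

section
/- Every non-binary phylogenetic tree T with n leaves admits a binary phylogenetic tree T' with n leaves such that Φ(T') > Φ(T). Consequently, any tree attaining the maximum total cophenetic index among all trees with n leaves is binary. -/
/-- Rooted trees with natural-number-labeled leaves. -/
inductive PTree where
  | leaf : ℕ → PTree
  | node : List PTree → PTree

namespace PTree

/-- The list of leaf labels of a tree, in left-to-right order. -/
def leaves : PTree → List ℕ
  | .leaf i => [i]
  | .node ts => ts.attach.flatMap (fun t => leaves t.1)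
decreasing_by have := List.sizeOf_lt_of_mem t.2; simp_wf; omega

/-- The depth (number of arcs from the root) of the leaf labeled `i`. -/
def leafDepth : PTree → ℕ → ℕ
  | .leaf _, _ => 0
  | .node ts, i =>
      (ts.attach.map (fun t => if i ∈ leaves t.1 then 1 + leafDepth t.1 i else 0)).sum
decreasing_by have := List.sizeOf_lt_of_mem t.2; simp_wf; omega

/-- The cophenetic value of `i` and `j`: the depth of their lowest common ancestor. -/
def cophen : PTree → ℕ → ℕ → ℕ
  | .leaf _, _, _ => 0
  | .node ts, i, j =>
      (ts.attach.map (fun t =>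
        if i ∈ leaves t.1 ∧ j ∈ leaves t.1 then 1 + cophen t.1 i j else 0)).sum
decreasing_by have := List.sizeOf_lt_of_mem t.2; simp_wf; omega

/-- The nodal distance between the leaves labeled `i` and `j`:
the number of edges on the undirected path joining them. -/
def ndist : PTree → ℕ → ℕ → ℕ
  | .leaf _, _, _ => 0
  | .node ts, i, j =>
      (ts.attach.map (fun t =>
        if i ∈ leaves t.1 ∧ j ∈ leaves t.1 then ndist t.1 i j
        else if i ∈ leaves t.1 then 1 + leafDepth t.1 i
        else if j ∈ leaves t.1 then 1 + leafDepth t.1 j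
        else 0)).sum
decreasing_by have := List.sizeOf_lt_of_mem t.2; simp_wf; omega

/-- The list of the numbers of descendant leaves of each internal node,
with the root (if internal) first. -/
def allInternalSizes : PTree → List ℕ
  | .leaf _ => []
  | .node ts => (PTree.node ts).leaves.length :: ts.attach.flatMap (fun t => allInternalSizes t.1)
decreasing_by have := List.sizeOf_lt_of_mem t.2; simp_wf; omega

/-- The total cophenetic index: sum of cophenetic values over pairs of distinct leaves. -/
def Phi (T : PTree) : ℕ :=
  ∑ i ∈ T.leaves.toFinset, ∑ j ∈ T.leaves.toFinset, if i < j then cophen T i j else 0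

/-- The Sackin index: the sum of the depths of the leaves. -/
def Sackin (T : PTree) : ℕ := ∑ i ∈ T.leaves.toFinset, leafDepth T i

/-- The total area: the sum of the nodal distances between pairs of distinct leaves. -/
def Darea (T : PTree) : ℕ :=
  ∑ i ∈ T.leaves.toFinset, ∑ j ∈ T.leaves.toFinset, if i < j then ndist T i j else 0

/-- A tree is binary when every internal node has exactly two children. -/
def IsBinary : PTree → Prop
  | .leaf _ => True
  | .node ts => ts.length = 2 ∧ ∀ t ∈ ts.attach, IsBinary t.1
decreasing_by have := List.sizeOf_lt_of_mem t.2; simp_wf; omega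

/-- A tree is proper when every internal node has at least two children. -/
def Proper : PTree → Prop
  | .leaf _ => True
  | .node ts => 2 ≤ ts.length ∧ ∀ t ∈ ts.attach, Proper t.1
decreasing_by have := List.sizeOf_lt_of_mem t.2; simp_wf; omega

/-- `T` is a phylogenetic tree with `n` leaves: a proper rooted tree whose leaves are
bijectively labeled by `{1, …, n}`. -/
def IsPhylo (n : ℕ) (T : PTree) : Prop :=
  Proper T ∧ T.leaves.Nodup ∧ T.leaves.toFinset = Finset.Icc 1 n

/-- A rooted caterpillar: a binary tree all of whose internal nodes have a leaf child. -/
def IsCaterpillar : PTree → Prop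
  | .leaf _ => True
  | .node ts => ts.length = 2 ∧ (∃ t ∈ ts, ∃ i, t = PTree.leaf i) ∧
      ∀ t ∈ ts.attach, IsCaterpillar t.1
decreasing_by have := List.sizeOf_lt_of_mem t.2; simp_wf; omega

/-- A binary tree is maximally balanced when every internal node is balanced, i.e. the
numbers of descendant leaves of its two children differ by at most one. -/
def MaxBalanced : PTree → Prop
  | .leaf _ => True
  | .node [a, b] =>
      |(a.leaves.length : ℤ) - (b.leaves.length : ℤ)| ≤ 1 ∧ MaxBalanced a ∧ MaxBalanced b
  | .node _ => False

/-- Canonical representative of an isomorphism class of binary trees: at every internal node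
the subtree containing the smallest leaf label comes first. -/
def Canonical : PTree → Prop
  | .leaf _ => True
  | .node [a, b] => a.leaves.minimum < b.leaves.minimum ∧ Canonical a ∧ Canonical b
  | .node _ => False

/-- The rooted caterpillar with `n` leaves labeled `1, …, n` (for `n ≥ 1`). -/
def caterpillar : ℕ → PTree
  | 0 => .leaf 1
  | 1 => .leaf 1
  | n + 2 => .node [caterpillar (n + 1), .leaf (n + 2)]

/-- `Replace T t₀ t₀' T'` holds when `T'` is obtained from `T` by replacing the subtree `t₀`
of `T` rooted at some node by the tree `t₀'`. -/
inductive Replace : PTree → PTree → PTree → PTree → Prop where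
  | here (t₀ t₀' : PTree) : Replace t₀ t₀ t₀' t₀'
  | child (l r : List PTree) (a b t₀ t₀' : PTree) :
      Replace a t₀ t₀' b → Replace (.node (l ++ a :: r)) t₀ t₀' (.node (l ++ b :: r))

/-- The probability of a binary phylogenetic tree with `n` leaves under the Yule model. -/
noncomputable def yuleP (n : ℕ) (T : PTree) : ℝ :=
  (2 ^ (n - 1) / (n.factorial : ℝ)) *
    ((allInternalSizes T).map (fun k => ((k : ℝ) - 1)⁻¹)).prod


section Aux

lemma leaves_node (ts : List PTree) : leaves (.node ts) = ts.flatMap leaves := by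
  rw [leaves]
  conv_rhs => rw [← List.attach_map_subtype_val ts]
  rw [List.flatMap_map]

lemma cophen_node (ts : List PTree) (i j : ℕ) :
    cophen (.node ts) i j =
      (ts.map (fun t => if i ∈ leaves t ∧ j ∈ leaves t then 1 + cophen t i j else 0)).sum := by
  rw [cophen]
  conv_rhs => rw [← List.attach_map_subtype_val ts]
  rw [List.map_map]
  rfl

lemma attach_map_sum (ts : List PTree) (f : PTree → ℕ) :
    (ts.attach.map (fun t => f t.1)).sum = (ts.map f).sum := by
  conv_rhs => rw [← List.attach_map_subtype_val ts]
  rw [List.map_map]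
  rfl

/-- Total excess of internal node degrees over 2. -/
def excess : PTree → ℕ
  | .leaf _ => 0
  | .node ts => (ts.length - 2) + (ts.attach.map (fun t => excess t.1)).sum
decreasing_by have := List.sizeOf_lt_of_mem t.2; simp_wf; omega

lemma excess_node (ts : List PTree) :
    excess (.node ts) = (ts.length - 2) + (ts.map excess).sum := by
  rw [excess, attach_map_sum]

lemma forall_attach {α : Type*} {P : α → Prop} {ts : List α} :
    (∀ t ∈ ts.attach, P t.1) ↔ ∀ t ∈ ts, P t := by
  constructor
  · intro h t ht; exact h ⟨t, ht⟩ (List.mem_attach _ _)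
  · intro h t _; exact h t.1 t.2

lemma proper_node {ts : List PTree} :
    Proper (.node ts) ↔ 2 ≤ ts.length ∧ ∀ t ∈ ts, Proper t := by
  rw [Proper, forall_attach]

lemma isBinary_node {ts : List PTree} :
    IsBinary (.node ts) ↔ ts.length = 2 ∧ ∀ t ∈ ts, IsBinary t := by
  rw [IsBinary, forall_attach]

lemma isBinary_leaf (k : ℕ) : IsBinary (.leaf k) := by rw [IsBinary]; trivial

lemma leaves_ne_nil : ∀ (T : PTree), Proper T → leaves T ≠ [] := by
  intro T hp
  match T with
  | .leaf k => simp [leaves]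
  | .node ts =>
    rw [proper_node] at hp
    have hne : ts ≠ [] := by intro h; subst h; simp at hp
    obtain ⟨a, ha⟩ := List.exists_mem_of_ne_nil ts hne
    have hla : leaves a ≠ [] := leaves_ne_nil a (hp.2 a ha)
    obtain ⟨x, hx⟩ := List.exists_mem_of_ne_nil _ hla
    rw [leaves_node]
    exact List.ne_nil_of_mem (List.mem_flatMap.mpr ⟨a, ha, hx⟩)
termination_by T => sizeOf T
decreasing_by have := List.sizeOf_lt_of_mem ha; simp; omega

lemma nodup_sub {ts : List PTree} {t : PTree} (ht : t ∈ ts)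
    (h : (leaves (.node ts)).Nodup) : (leaves t).Nodup := by
  obtain ⟨l, r, rfl⟩ := List.append_of_mem ht
  rw [leaves_node] at h
  simp only [List.flatMap_append, List.flatMap_cons] at h
  have hs : List.Sublist (leaves t) (l.flatMap leaves ++ (leaves t ++ r.flatMap leaves)) :=
    ((List.sublist_append_left _ _).trans (List.sublist_append_right _ _))
  exact h.sublist hs

lemma cophen_comm : ∀ (T : PTree) (i j : ℕ), cophen T i j = cophen T j i := by
  intro T i j
  match T with
  | .leaf k => rw [cophen, cophen]
  | .node ts =>
    rw [cophen_node, cophen_node]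
    congr 1
    apply List.map_congr_left
    intro t ht
    rw [cophen_comm t i j]
    exact if_congr and_comm rfl rfl
termination_by T => sizeOf T
decreasing_by have := List.sizeOf_lt_of_mem ht; simp; omega

lemma replace_step (l r : List PTree) (t t' : PTree)
    (hleaf : leaves t' = leaves t)
    (hprop : Proper t') (hPn : Proper (.node (l ++ t :: r)))
    (hex : excess t' < excess t)
    (hmono : ∀ i j, cophen t i j ≤ cophen t' i j)
    (i₀ j₀ : ℕ) (hi : i₀ ∈ leaves t) (hj : j₀ ∈ leaves t)
    (hstrict : cophen t i₀ j₀ < cophen t' i₀ j₀) :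
    Proper (.node (l ++ t' :: r)) ∧
    leaves (.node (l ++ t' :: r)) = leaves (.node (l ++ t :: r)) ∧
    excess (.node (l ++ t' :: r)) < excess (.node (l ++ t :: r)) ∧
    (∀ i j, cophen (.node (l ++ t :: r)) i j ≤ cophen (.node (l ++ t' :: r)) i j) ∧
    cophen (.node (l ++ t :: r)) i₀ j₀ < cophen (.node (l ++ t' :: r)) i₀ j₀ := by
  rw [proper_node] at hPn
  refine ⟨?_, ?_, ?_, ?_, ?_⟩
  · rw [proper_node]
    constructor
    · simp at hPn ⊢; omega
    · intro s hs
      rcases List.mem_append.mp hs with h | h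
      · exact hPn.2 s (List.mem_append_left _ h)
      · rcases List.mem_cons.mp h with rfl | h
        · exact hprop
        · exact hPn.2 s (List.mem_append_right _ (List.mem_cons_of_mem _ h))
  · simp [leaves_node, List.flatMap_append, List.flatMap_cons, hleaf]
  · simp only [excess_node, List.map_append, List.map_cons, List.sum_append, List.sum_cons,
      List.length_append, List.length_cons]
    omega
  · intro i j
    simp only [cophen_node, List.map_append, List.map_cons, List.sum_append, List.sum_cons]
    have : (if i ∈ leaves t ∧ j ∈ leaves t then 1 + cophen t i j else 0)
        ≤ (if i ∈ leaves t' ∧ j ∈ leaves t' then 1 + cophen t' i j else 0) := by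
      rw [hleaf]
      split
      · exact Nat.add_le_add_left (hmono i j) 1
      · exact le_refl 0
    omega
  · simp only [cophen_node, List.map_append, List.map_cons, List.sum_append, List.sum_cons]
    have h1 : (if i₀ ∈ leaves t ∧ j₀ ∈ leaves t then 1 + cophen t i₀ j₀ else 0)
        < (if i₀ ∈ leaves t' ∧ j₀ ∈ leaves t' then 1 + cophen t' i₀ j₀ else 0) := by
      rw [hleaf, if_pos ⟨hi, hj⟩, if_pos ⟨hi, hj⟩]
      omega
    omega

lemma step_main : ∀ (T : PTree), Proper T → ¬ IsBinary T → (leaves T).Nodup →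
    ∃ T', Proper T' ∧ leaves T' = leaves T ∧ excess T' < excess T ∧
      (∀ i j, cophen T i j ≤ cophen T' i j) ∧
      ∃ i j, i ∈ leaves T ∧ j ∈ leaves T ∧ i ≠ j ∧ cophen T i j < cophen T' i j := by
  intro T hp hnb hnd
  match T with
  | .leaf k => exact absurd (isBinary_leaf k) hnb
  | .node ts =>
    rw [proper_node] at hp
    obtain ⟨hl2, hch⟩ := hp
    by_cases hlen : ts.length = 2
    · -- some child is not binary; recurse
      rw [isBinary_node] at hnb
      push_neg at hnb
      obtain ⟨t, ht, hnbt⟩ := hnb hlen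
      have hmemsz := List.sizeOf_lt_of_mem ht
      obtain ⟨l, r, rfl⟩ := List.append_of_mem ht
      obtain ⟨t', h1, h2, h3, h4, i₀, j₀, hi, hj, hne, hst⟩ :=
        step_main t (hch t ht) hnbt (nodup_sub ht hnd)
      obtain ⟨P1, P2, P3, P4, P5⟩ :=
        replace_step l r t t' h2 h1 (proper_node.mpr ⟨hl2, hch⟩) h3 h4 i₀ j₀ hi hj hst
      have hmem : ∀ x, x ∈ leaves t → x ∈ leaves (.node (l ++ t :: r)) := by
        intro x hx
        rw [leaves_node]
        exact List.mem_flatMap.mpr ⟨t, ht, hx⟩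
      exact ⟨_, P1, P2, P3, P4, i₀, j₀, hmem _ hi, hmem _ hj, hne, P5⟩
    · -- the root has ≥ 3 children: regroup the first two
      have h3 : 3 ≤ ts.length := by omega
      obtain ⟨a, ts1, rfl⟩ := List.exists_cons_of_ne_nil
        (by intro h; subst h; simp at h3 : ts ≠ [])
      obtain ⟨b, ts2, rfl⟩ := List.exists_cons_of_ne_nil
        (by intro h; subst h; simp at h3 : ts1 ≠ [])
      obtain ⟨c, rest, rfl⟩ := List.exists_cons_of_ne_nil
        (by intro h; subst h; simp at h3 : ts2 ≠ [])
      have hpa : Proper a := hch a (by simp)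
      have hpb : Proper b := hch b (by simp)
      have hpc : Proper c := hch c (by simp)
      refine ⟨.node (.node [a, b] :: c :: rest), ?_, ?_, ?_, ?_, ?_⟩
      · rw [proper_node]
        refine ⟨by simp, ?_⟩
        intro s hs
        rcases List.mem_cons.mp hs with rfl | hs
        · rw [proper_node]
          refine ⟨by simp, ?_⟩
          intro s hs
          rcases List.mem_cons.mp hs with rfl | hs
          · exact hpa
          · simp at hs; subst hs; exact hpb
        · exact hch s (List.mem_cons_of_mem _ (List.mem_cons_of_mem _ hs))
      · simp [leaves_node, List.flatMap_cons]
      · simp only [excess_node, List.map_cons, List.sum_cons, List.length_cons, List.map_nil,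
          List.sum_nil, List.length_nil]
        omega
      · intro i j
        have hlab : leaves (PTree.node [a, b]) = leaves a ++ leaves b := by
          simp [leaves_node]
        simp only [cophen_node, List.map_cons, List.sum_cons, hlab, List.map_nil,
          List.sum_nil, add_zero]
        by_cases hc : i ∈ leaves a ++ leaves b ∧ j ∈ leaves a ++ leaves b
        · rw [if_pos hc]
          omega
        · rw [if_neg hc]
          have ha0 : (if i ∈ leaves a ∧ j ∈ leaves a then 1 + cophen a i j else 0) = 0 := by
            rw [if_neg]
            rintro ⟨u, v⟩
            exact hc ⟨List.mem_append_left _ u, List.mem_append_left _ v⟩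
          have hb0 : (if i ∈ leaves b ∧ j ∈ leaves b then 1 + cophen b i j else 0) = 0 := by
            rw [if_neg]
            rintro ⟨u, v⟩
            exact hc ⟨List.mem_append_right _ u, List.mem_append_right _ v⟩
          omega
      · -- strict pair: one leaf of `a`, one leaf of `b`
        obtain ⟨i₀, hi⟩ := List.exists_mem_of_ne_nil _ (leaves_ne_nil a hpa)
        obtain ⟨j₀, hj⟩ := List.exists_mem_of_ne_nil _ (leaves_ne_nil b hpb)
        have hndL : (leaves a ++ (leaves b ++ ((c :: rest).flatMap leaves))).Nodup := by
          have := hnd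
          rw [leaves_node] at this
          simpa [List.flatMap_cons, List.append_assoc] using this
        have hdisj : List.Disjoint (leaves a) (leaves b ++ ((c :: rest).flatMap leaves)) :=
          (List.nodup_append'.mp hndL).2.2
        have hja : j₀ ∉ leaves a := fun h => hdisj h (List.mem_append_left _ hj)
        have hib : i₀ ∉ leaves b := by
          have h2 := (List.nodup_append'.mp ((List.nodup_append'.mp hndL).2.1)).2.2
          intro h
          exact absurd hi (fun hh => hdisj hh (List.mem_append_left _ h))
        have hmemT : ∀ x s, s ∈ a :: b :: c :: rest → x ∈ leaves s →
            x ∈ leaves (PTree.node (a :: b :: c :: rest)) := by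
          intro x s hs hx
          rw [leaves_node]
          exact List.mem_flatMap.mpr ⟨s, hs, hx⟩
        refine ⟨i₀, j₀, hmemT i₀ a (by simp) hi, hmemT j₀ b (by simp) hj,
          fun h => hja (h ▸ hi), ?_⟩
        have hlab : leaves (PTree.node [a, b]) = leaves a ++ leaves b := by
          simp [leaves_node]
        simp only [cophen_node, List.map_cons, List.sum_cons, hlab, List.map_nil,
          List.sum_nil, add_zero]
        have ha0 : (if i₀ ∈ leaves a ∧ j₀ ∈ leaves a then 1 + cophen a i₀ j₀ else 0) = 0 := by
          rw [if_neg]; rintro ⟨u, v⟩; exact hja v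
        have hb0 : (if i₀ ∈ leaves b ∧ j₀ ∈ leaves b then 1 + cophen b i₀ j₀ else 0) = 0 := by
          rw [if_neg]; rintro ⟨u, v⟩; exact hib u
        have hcc : i₀ ∈ leaves a ++ leaves b ∧ j₀ ∈ leaves a ++ leaves b :=
          ⟨List.mem_append_left _ hi, List.mem_append_right _ hj⟩
        rw [if_pos hcc, ha0, hb0]
        omega
termination_by T => sizeOf T
decreasing_by have := hmemsz; simp; omega

lemma Phi_lt_aux (T T' : PTree) (hleaf : leaves T' = leaves T)
    (hmono : ∀ i j, cophen T i j ≤ cophen T' i j)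
    (i₀ j₀ : ℕ) (hi : i₀ ∈ leaves T) (hj : j₀ ∈ leaves T) (hlt : i₀ < j₀)
    (hs : cophen T i₀ j₀ < cophen T' i₀ j₀) : Phi T < Phi T' := by
  unfold Phi
  rw [hleaf]
  apply Finset.sum_lt_sum
  · intro i _
    apply Finset.sum_le_sum
    intro j _
    split
    · exact hmono i j
    · exact le_refl 0
  · refine ⟨i₀, List.mem_toFinset.mpr hi, ?_⟩
    apply Finset.sum_lt_sum
    · intro j _
      split
      · exact hmono i₀ j
      · exact le_refl 0
    · refine ⟨j₀, List.mem_toFinset.mpr hj, ?_⟩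
      rw [if_pos hlt, if_pos hlt]
      exact hs

lemma Phi_lt (T T' : PTree) (hleaf : leaves T' = leaves T)
    (hmono : ∀ i j, cophen T i j ≤ cophen T' i j)
    (i₀ j₀ : ℕ) (hi : i₀ ∈ leaves T) (hj : j₀ ∈ leaves T) (hne : i₀ ≠ j₀)
    (hs : cophen T i₀ j₀ < cophen T' i₀ j₀) : Phi T < Phi T' := by
  rcases hne.lt_or_gt with h | h
  · exact Phi_lt_aux T T' hleaf hmono i₀ j₀ hi hj h hs
  · refine Phi_lt_aux T T' hleaf hmono j₀ i₀ hj hi h ?_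
    rw [cophen_comm T j₀ i₀, cophen_comm T' j₀ i₀]
    exact hs

lemma iterate_step : ∀ (k n : ℕ) (T : PTree), excess T ≤ k → IsPhylo n T → ¬ IsBinary T →
    ∃ T', IsPhylo n T' ∧ IsBinary T' ∧ Phi T < Phi T' := by
  intro k
  induction k with
  | zero =>
    intro n T hk hT hnb
    obtain ⟨T', _, _, hex, _⟩ := step_main T hT.1 hnb hT.2.1
    omega
  | succ k ih =>
    intro n T hk hT hnb
    obtain ⟨T', h1, h2, h3, h4, i, j, hi, hj, hne, hst⟩ := step_main T hT.1 hnb hT.2.1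
    have hPhi : Phi T < Phi T' := Phi_lt T T' h2 h4 i j hi hj hne hst
    have hT' : IsPhylo n T' := ⟨h1, by rw [h2]; exact hT.2.1, by rw [h2]; exact hT.2.2⟩
    by_cases hb : IsBinary T'
    · exact ⟨T', hT', hb, hPhi⟩
    · obtain ⟨T'', hT'', hb'', hP''⟩ := ih n T' (by omega) hT' hb
      exact ⟨T'', hT'', hb'', hPhi.trans hP''⟩

end Aux

end PTree

theorem nonbinary_not_maximal (n : ℕ) (T : PTree) (hT : PTree.IsPhylo n T) :
    (¬ PTree.IsBinary T →
      ∃ T', PTree.IsPhylo n T' ∧ PTree.IsBinary T' ∧ PTree.Phi T < PTree.Phi T') ∧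
    ((∀ T', PTree.IsPhylo n T' → PTree.Phi T' ≤ PTree.Phi T) → PTree.IsBinary T) := by
  constructor
  · intro hnb
    exact PTree.iterate_step (PTree.excess T) n T le_rfl hT hnb
  · intro hmax
    by_contra hnb
    obtain ⟨T', hT', _, hlt⟩ := PTree.iterate_step (PTree.excess T) n T le_rfl hT hnb
    exact absurd (hmax T' hT') (not_le.mpr hlt)
end

section
/- Let f(n) denote the minimum of the total cophenetic index Φ over all binary phylogenetic trees with n leaves. Then f(1) = f(2) = 0 and, for n ≥ 3, f(n) = f(⌈n/2⌉) + f(⌊n/2⌋) + binom(⌈n/2⌉,2) + binom(⌊n/2⌋,2). -/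
namespace PTree

/- ===== auxiliary development ===== -/

def F : ℕ → ℕ
  | 0 => 0
  | 1 => 0
  | (n+2) => F ((n+3)/2) + F ((n+2)/2) + Nat.choose ((n+3)/2) 2 + Nat.choose ((n+2)/2) 2
decreasing_by all_goals omega

theorem F_rec (n : ℕ) (h : 2 ≤ n) :
    F n = F ((n+1)/2) + F (n/2) + Nat.choose ((n+1)/2) 2 + Nat.choose (n/2) 2 := by
  obtain ⟨m, rfl⟩ : ∃ m, n = m + 2 := ⟨n - 2, by omega⟩
  rw [F]

def G (n : ℕ) : ℕ := F n + n.choose 2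

theorem choose2_succ (k : ℕ) : (k+1).choose 2 = k.choose 2 + k := by
  rw [Nat.choose_succ_succ]; simp [Nat.choose_one_right]; omega

theorem G_rec (n : ℕ) (h : 2 ≤ n) : G n = G ((n+1)/2) + G (n/2) + n.choose 2 := by
  have h2 : (n+1)/2 + n/2 = n := by omega
  simp only [G, F_rec n h]
  omega

theorem G_convex3 : ∀ n : ℕ, 2 * G (n+1) ≤ G n + G (n+2) := by
  intro n
  induction n using Nat.strong_induction_on with
  | _ n ih =>
    match n, ih with
    | 0, _ => simp [G, F]
    | 1, _ => simp [G, F]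
    | (m+2), ih =>
      rcases Nat.even_or_odd (m+2) with ⟨k, hk⟩ | ⟨k, hk⟩
      · have hk1 : 1 ≤ k := by omega
        have e1 : G (2*k) = 2 * G k + (2*k).choose 2 := by
          rw [G_rec (2*k) (by omega)]
          have : (2*k+1)/2 = k := by omega
          have h2 : (2*k)/2 = k := by omega
          rw [this, h2]; omega
        have e2 : G (2*k+1) = G (k+1) + G k + (2*k+1).choose 2 := by
          rw [G_rec (2*k+1) (by omega)]
          have : (2*k+1+1)/2 = k+1 := by omega
          have h2 : (2*k+1)/2 = k := by omega
          rw [this, h2]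
        have e3 : G (2*k+2) = 2 * G (k+1) + (2*k+2).choose 2 := by
          rw [G_rec (2*k+2) (by omega)]
          have : (2*k+2+1)/2 = k+1 := by omega
          have h2 : (2*k+2)/2 = k+1 := by omega
          rw [this, h2]; omega
        have hb1 := choose2_succ (2*k)
        have hb2 := choose2_succ (2*k+1)
        rw [show 2*k+1+1 = 2*k+2 by omega] at hb2
        have hn : m + 2 = 2*k := by omega
        rw [hn]
        omega
      · have hk1 : 1 ≤ k := by omega
        have e1 : G (2*k+1) = G (k+1) + G k + (2*k+1).choose 2 := by
          rw [G_rec (2*k+1) (by omega)]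
          have : (2*k+1+1)/2 = k+1 := by omega
          have h2 : (2*k+1)/2 = k := by omega
          rw [this, h2]
        have e2 : G (2*k+2) = 2 * G (k+1) + (2*k+2).choose 2 := by
          rw [G_rec (2*k+2) (by omega)]
          have : (2*k+2+1)/2 = k+1 := by omega
          have h2 : (2*k+2)/2 = k+1 := by omega
          rw [this, h2]; omega
        have e3 : G (2*k+3) = G (k+2) + G (k+1) + (2*k+3).choose 2 := by
          rw [G_rec (2*k+3) (by omega)]
          have : (2*k+3+1)/2 = k+2 := by omega
          have h2 : (2*k+3)/2 = k+1 := by omega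
          rw [this, h2]
        have ihk : 2 * G (k+1) ≤ G k + G (k+2) := ih k (by omega)
        have hb1 := choose2_succ (2*k+1)
        have hb2 := choose2_succ (2*k+2)
        rw [show 2*k+1+1 = 2*k+2 by omega] at hb1
        rw [show 2*k+2+1 = 2*k+3 by omega] at hb2
        have hn : m + 2 = 2*k+1 := by omega
        rw [hn]
        rw [show 2*k+1+1 = 2*k+2 by omega, show 2*k+1+2 = 2*k+3 by omega]
        omega

theorem G_step : ∀ b a : ℕ, a ≤ b → G (a+1) + G b ≤ G a + G (b+1) := by
  intro b
  induction b with
  | zero => intro a ha; interval_cases a; omega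
  | succ m ih =>
    intro a ha
    rcases Nat.lt_or_ge a (m+1) with h | h
    · have h1 := ih a (by omega)
      have h2 := G_convex3 m
      rw [show m+1+1 = m+2 by omega]
      omega
    · have : a = m+1 := by omega
      subst this
      omega

theorem G_balance : ∀ d p q : ℕ, q - p = d → p ≤ q →
    G ((p+q+1)/2) + G ((p+q)/2) ≤ G p + G q := by
  intro d
  induction d using Nat.strong_induction_on with
  | _ d ih =>
    intro p q hd hpq
    rcases Nat.lt_or_ge (q - p) 2 with h | h
    · rcases Nat.lt_or_ge p q with h2 | h2
      · have : q = p + 1 := by omega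
        rw [this]
        have e1 : (p+(p+1)+1)/2 = p+1 := by omega
        have e2 : (p+(p+1))/2 = p := by omega
        rw [e1, e2]; omega
      · have : q = p := by omega
        rw [this]
        have e1 : (p+p+1)/2 = p := by omega
        have e2 : (p+p)/2 = p := by omega
        rw [e1, e2]
    · have step := G_step (q-1) p (by omega)
      have hq : q - 1 + 1 = q := by omega
      rw [hq] at step
      have ihh := ih (q - 1 - (p+1)) (by omega) (p+1) (q-1) rfl (by omega)
      have hsum : p + 1 + (q-1) = p + q := by omega
      rw [hsum] at ihh
      omega

theorem G_min_split (p q : ℕ) :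
    F ((p+q+1)/2) + F ((p+q)/2) + Nat.choose ((p+q+1)/2) 2 + Nat.choose ((p+q)/2) 2
      ≤ F p + F q + p.choose 2 + q.choose 2 := by
  rcases Nat.le_total p q with h | h
  · have := G_balance (q-p) p q rfl h
    simp only [G] at this; omega
  · have := G_balance (p-q) q p rfl h
    simp only [G] at this
    have e : q + p = p + q := by omega
    rw [e] at this; omega

theorem leaves_pair (a b : PTree) : leaves (.node [a,b]) = leaves a ++ leaves b := by
  rw [leaves]; simp

theorem cophen_pair (a b : PTree) (i j : ℕ) : cophen (.node [a,b]) i j =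
    (if i ∈ leaves a ∧ j ∈ leaves a then 1 + cophen a i j else 0) +
    (if i ∈ leaves b ∧ j ∈ leaves b then 1 + cophen b i j else 0) := by
  rw [cophen]; simp

theorem isBinary_pair (a b : PTree) :
    IsBinary (.node [a,b]) ↔ IsBinary a ∧ IsBinary b := by
  rw [IsBinary]; simp

theorem proper_pair (a b : PTree) :
    Proper (.node [a,b]) ↔ Proper a ∧ Proper b := by
  rw [Proper]; simp

theorem sum_pairs (S : Finset ℕ) :
    (∑ i ∈ S, ∑ j ∈ S, if i < j then 1 else 0) = S.card.choose 2 := by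
  induction S using Finset.induction_on with
  | empty => simp
  | @insert x s hx ih =>
    rw [Finset.sum_insert hx]
    have h1 : ∀ i, (∑ j ∈ insert x s, if i < j then 1 else 0)
        = (if i < x then 1 else 0) + ∑ j ∈ s, if i < j then 1 else 0 := by
      intro i; rw [Finset.sum_insert hx]
    simp only [h1]
    rw [Finset.sum_add_distrib, ih]
    have h2 : (∑ j ∈ s, if x < j then 1 else 0) + (∑ i ∈ s, if i < x then 1 else 0)
        = s.card := by
      rw [← Finset.sum_add_distrib, Finset.card_eq_sum_ones]
      apply Finset.sum_congr rfl
      intro i hi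
      have : i ≠ x := fun h => hx (h ▸ hi)
      rcases lt_trichotomy x i with h|h|h <;> simp [h, this] <;> omega
    rw [Finset.card_insert_of_notMem hx]
    have h4 : (s.card + 1).choose 2 = s.card.choose 2 + s.card := by
      rw [Nat.choose_succ_succ]; simp [Nat.choose_one_right]; omega
    simp only [lt_irrefl, if_false]
    omega

theorem Phi_pair (a b : PTree) (h : (leaves a ++ leaves b).Nodup) :
    Phi (.node [a,b]) = Phi a + Phi b
      + (leaves a).length.choose 2 + (leaves b).length.choose 2 := by
  rw [List.nodup_append] at h
  obtain ⟨ha, hb, hd⟩ := h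
  set SA := (leaves a).toFinset with hSA
  set SB := (leaves b).toFinset with hSB
  have hdis : Disjoint SA SB := by
    rw [List.disjoint_toFinset_iff_disjoint]; exact fun x hx1 hx2 => hd x hx1 x hx2 rfl
  have hmemA : ∀ i ∈ SA, i ∈ leaves a := fun i hi => List.mem_toFinset.mp hi
  have hmemB : ∀ i ∈ SB, i ∈ leaves b := fun i hi => List.mem_toFinset.mp hi
  have hnA : ∀ i ∈ SA, i ∉ leaves b := fun i hi => fun hc => hd i (hmemA i hi) i hc rfl
  have hnB : ∀ i ∈ SB, i ∉ leaves a := fun i hi => fun hc => hd i hc i (hmemB i hi) rfl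
  have hU : (leaves (.node [a,b])).toFinset = SA ∪ SB := by
    rw [leaves_pair]; exact List.toFinset_append
  rw [Phi, hU]
  rw [Finset.sum_union hdis]
  have inner : ∀ (i : ℕ), (∑ j ∈ SA ∪ SB, if i < j then cophen (.node [a,b]) i j else 0)
      = (∑ j ∈ SA, if i < j then cophen (.node [a,b]) i j else 0)
      + (∑ j ∈ SB, if i < j then cophen (.node [a,b]) i j else 0) :=
    fun i => Finset.sum_union hdis
  simp only [inner]
  rw [Finset.sum_add_distrib, Finset.sum_add_distrib]
  have tAA : (∑ i ∈ SA, ∑ j ∈ SA, if i < j then cophen (.node [a,b]) i j else 0)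
      = SA.card.choose 2 + Phi a := by
    have point : ∀ i ∈ SA, ∀ j ∈ SA, (if i < j then cophen (.node [a,b]) i j else 0)
        = (if i < j then 1 else 0) + (if i < j then cophen a i j else 0) := by
      intro i hi j hj
      rw [cophen_pair]
      have h1 : i ∈ leaves a := hmemA i hi
      have h2 : j ∈ leaves a := hmemA j hj
      have h3 : i ∉ leaves b := hnA i hi
      by_cases hij : i < j <;> simp [hij, h1, h2, h3]
    rw [Finset.sum_congr rfl (fun i hi => Finset.sum_congr rfl (fun j hj => point i hi j hj))]
    simp only [Finset.sum_add_distrib]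
    rw [sum_pairs, Phi]
  have tBB : (∑ i ∈ SB, ∑ j ∈ SB, if i < j then cophen (.node [a,b]) i j else 0)
      = SB.card.choose 2 + Phi b := by
    have point : ∀ i ∈ SB, ∀ j ∈ SB, (if i < j then cophen (.node [a,b]) i j else 0)
        = (if i < j then 1 else 0) + (if i < j then cophen b i j else 0) := by
      intro i hi j hj
      rw [cophen_pair]
      have h1 : i ∈ leaves b := hmemB i hi
      have h2 : j ∈ leaves b := hmemB j hj
      have h3 : i ∉ leaves a := hnB i hi
      by_cases hij : i < j <;> simp [hij, h1, h2, h3]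
    rw [Finset.sum_congr rfl (fun i hi => Finset.sum_congr rfl (fun j hj => point i hi j hj))]
    simp only [Finset.sum_add_distrib]
    rw [sum_pairs, Phi]
  have tAB : (∑ i ∈ SA, ∑ j ∈ SB, if i < j then cophen (.node [a,b]) i j else 0) = 0 := by
    apply Finset.sum_eq_zero; intro i hi
    apply Finset.sum_eq_zero; intro j hj
    have h1 : i ∉ leaves b := hnA i hi
    have h2 : j ∉ leaves a := hnB j hj
    rw [cophen_pair]
    simp [h1, h2]
  have tBA : (∑ i ∈ SB, ∑ j ∈ SA, if i < j then cophen (.node [a,b]) i j else 0) = 0 := by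
    apply Finset.sum_eq_zero; intro i hi
    apply Finset.sum_eq_zero; intro j hj
    have h1 : i ∉ leaves a := hnB i hi
    have h2 : j ∉ leaves b := hnA j hj
    rw [cophen_pair]
    simp [h1, h2]
  rw [tAA, tBB, tAB, tBA]
  rw [hSA, hSB, List.card_toFinset, List.card_toFinset, ha.dedup, hb.dedup]
  omega

theorem Phi_leaf (i : ℕ) : Phi (.leaf i) = 0 := by
  simp [Phi, leaves]

theorem binary_leaves_pos : ∀ t : PTree, IsBinary t → 1 ≤ (leaves t).length
  | .leaf i, _ => by simp [leaves]
  | .node ts, h => by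
      rw [IsBinary] at h
      obtain ⟨hl, hc⟩ := h
      obtain ⟨a, b, heq⟩ := List.length_eq_two.mp hl
      simp only [List.mem_attach, Subtype.forall] at hc
      have ha : IsBinary a := hc a (by rw [heq]; simp) trivial
      have hsz : sizeOf a < sizeOf (PTree.node ts) := by
        rw [heq]
        simp only [PTree.node.sizeOf_spec, List.cons.sizeOf_spec, List.nil.sizeOf_spec]
        omega
      have := binary_leaves_pos a ha
      rw [heq, leaves_pair]
      simp only [List.length_append]
      omega
decreasing_by exact hsz

theorem Phi_lower : ∀ t : PTree, IsBinary t → (leaves t).Nodup →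
    F (leaves t).length ≤ Phi t
  | .leaf i, _, _ => by simp [leaves, Phi_leaf, F]
  | .node ts, hb, hnd => by
      rw [IsBinary] at hb
      obtain ⟨hl, hc⟩ := hb
      obtain ⟨a, b, heq⟩ := List.length_eq_two.mp hl
      simp only [List.mem_attach, Subtype.forall] at hc
      have ha : IsBinary a := hc a (by rw [heq]; simp) trivial
      have hbb : IsBinary b := hc b (by rw [heq]; simp) trivial
      have hsza : sizeOf a < sizeOf (PTree.node ts) := by
        rw [heq]
        simp only [PTree.node.sizeOf_spec, List.cons.sizeOf_spec, List.nil.sizeOf_spec]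
        omega
      have hszb : sizeOf b < sizeOf (PTree.node ts) := by
        rw [heq]
        simp only [PTree.node.sizeOf_spec, List.cons.sizeOf_spec, List.nil.sizeOf_spec]
        omega
      rw [heq] at hnd ⊢
      rw [leaves_pair] at hnd ⊢
      have hnd2 := hnd
      rw [List.nodup_append] at hnd2
      have IHa := Phi_lower a ha hnd2.1
      have IHb := Phi_lower b hbb hnd2.2.1
      rw [Phi_pair a b hnd]
      have hp := binary_leaves_pos a ha
      have hq := binary_leaves_pos b hbb
      have key := G_min_split (leaves a).length (leaves b).length
      have hF := F_rec ((leaves a).length + (leaves b).length) (by omega)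
      rw [List.length_append]
      omega
decreasing_by
  · exact hsza
  · exact hszb

def bal : ℕ → ℕ → PTree
  | _, 0 => .leaf 1
  | s, 1 => .leaf s
  | s, (n+2) => .node [bal s ((n+3)/2), bal (s + (n+3)/2) ((n+2)/2)]
termination_by _ n => n
decreasing_by all_goals omega

theorem bal_leaves : ∀ (n s : ℕ), 1 ≤ n → leaves (bal s n) = List.range' s n
  | 1, s, _ => by rw [bal]; simp [leaves]
  | (n+2), s, _ => by
    rw [bal, leaves_pair, bal_leaves ((n+3)/2) s (by omega),
        bal_leaves ((n+2)/2) (s + (n+3)/2) (by omega)]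
    have h := List.range'_append (s := s) (m := (n+3)/2) (n := (n+2)/2) (step := 1)
    simp only [one_mul] at h
    rw [h, show (n+3)/2 + (n+2)/2 = n+2 by omega]
termination_by n => n
decreasing_by all_goals omega

theorem bal_binary : ∀ (n s : ℕ), IsBinary (bal s n)
  | 0, s => by rw [bal]; simp [IsBinary]
  | 1, s => by rw [bal]; simp [IsBinary]
  | (n+2), s => by
    rw [bal, isBinary_pair]
    exact ⟨bal_binary ((n+3)/2) s, bal_binary ((n+2)/2) (s + (n+3)/2)⟩
termination_by n => n
decreasing_by all_goals omega

theorem bal_proper : ∀ (n s : ℕ), Proper (bal s n)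
  | 0, s => by rw [bal]; simp [Proper]
  | 1, s => by rw [bal]; simp [Proper]
  | (n+2), s => by
    rw [bal, proper_pair]
    exact ⟨bal_proper ((n+3)/2) s, bal_proper ((n+2)/2) (s + (n+3)/2)⟩
termination_by n => n
decreasing_by all_goals omega

theorem bal_phi : ∀ (n s : ℕ), 1 ≤ n → Phi (bal s n) = F n
  | 1, s, _ => by rw [bal, Phi_leaf, F]
  | (n+2), s, _ => by
    have h1 : 1 ≤ (n+3)/2 := by omega
    have h2 : 1 ≤ (n+2)/2 := by omega
    have la := bal_leaves ((n+3)/2) s h1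
    have lb := bal_leaves ((n+2)/2) (s + (n+3)/2) h2
    have hnd : (leaves (bal s ((n+3)/2)) ++ leaves (bal (s + (n+3)/2) ((n+2)/2))).Nodup := by
      rw [la, lb]
      have h := List.range'_append (s := s) (m := (n+3)/2) (n := (n+2)/2) (step := 1)
      simp only [one_mul] at h
      rw [h]
      exact List.nodup_range' 1
    rw [bal, Phi_pair _ _ hnd, la, lb, List.length_range', List.length_range',
        bal_phi ((n+3)/2) s h1, bal_phi ((n+2)/2) (s + (n+3)/2) h2, F]
termination_by n => n
decreasing_by all_goals omega

theorem F_one : F 1 = 0 := by rw [F]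

theorem F_two : F 2 = 0 := by
  have : (2:ℕ) = 0 + 2 := rfl
  rw [this, F]
  norm_num
  rw [F]


end PTree

theorem phi_min_recurrence (f : ℕ → ℕ)
    (hf : ∀ n, f n = sInf (PTree.Phi '' {T | PTree.IsPhylo n T ∧ PTree.IsBinary T})) :
    f 1 = 0 ∧ f 2 = 0 ∧
    ∀ n, 3 ≤ n →
      f n = f ((n + 1) / 2) + f (n / 2) +
        Nat.choose ((n + 1) / 2) 2 + Nat.choose (n / 2) 2 := by
  have hkey : ∀ n, 1 ≤ n → f n = PTree.F n := by
    intro n hn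
    have hmem : PTree.Phi (PTree.bal 1 n) ∈
        PTree.Phi '' {T | PTree.IsPhylo n T ∧ PTree.IsBinary T} := by
      refine ⟨_, ⟨⟨PTree.bal_proper n 1, ?_, ?_⟩, PTree.bal_binary n 1⟩, rfl⟩
      · rw [PTree.bal_leaves n 1 hn]; exact List.nodup_range' 1
      · rw [PTree.bal_leaves n 1 hn]
        ext x
        simp only [List.mem_toFinset, List.mem_range', Finset.mem_Icc]
        constructor
        · rintro ⟨i, hi, rfl⟩; omega
        · intro hx; exact ⟨x - 1, by omega, by omega⟩
    have hub : f n ≤ PTree.F n := by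
      rw [hf n]
      have := Nat.sInf_le hmem
      rwa [PTree.bal_phi n 1 hn] at this
    have hlb : PTree.F n ≤ f n := by
      rw [hf n]
      have hne : (PTree.Phi '' {T | PTree.IsPhylo n T ∧ PTree.IsBinary T}).Nonempty :=
        ⟨_, hmem⟩
      obtain ⟨T, ⟨⟨hprop, hnd, hset⟩, hbin⟩, hPhi⟩ := Nat.sInf_mem hne
      have hlen : (PTree.leaves T).length = n := by
        have := List.toFinset_card_of_nodup hnd
        rw [hset, Nat.card_Icc] at this
        omega
      have hlow := PTree.Phi_lower T hbin hnd
      rw [hlen] at hlow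
      rw [← hPhi]
      exact hlow
    omega
  refine ⟨?_, ?_, ?_⟩
  · rw [hkey 1 le_rfl, PTree.F_one]
  · rw [hkey 2 (by omega), PTree.F_two]
  · intro n hn
    rw [hkey n (by omega), hkey ((n+1)/2) (by omega), hkey (n/2) (by omega)]
    exact PTree.F_rec n (by omega)
end
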